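/- Let X ⊆ ℂ be a continuum such that ℂ \ X has finitely many connected components. If X is not locally connected at some point x ∈ X (i.e., there is a neighborhood of x in X containing no connected neighborhood of x in X), then the fiber F_x is nontrivial: F_x ≠ {x}. -/

import Mathlib

open Set Topology OnePoint

noncomputable section

/-- The set of connected components of a subset `S`. -/
def comps {α : Type*} [TopologicalSpace α] (S : Set α) : Set (Set α) :=
  {C | ∃ z ∈ S, C = connectedComponentIn S z}

/-- A simple closed curve in the extended plane: the image of an injective
continuous map from the unit circle. -/
def IsSimpleClosedCurve (γ : Set (OnePoint ℂ)) : Prop :=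
  ∃ f : (Metric.sphere (0 : ℂ) 1) → OnePoint ℂ,
    Continuous f ∧ Function.Injective f ∧ γ = Set.range f

/-- A subset of `ℂ` viewed inside the extended plane. -/
def emb (X : Set ℂ) : Set (OnePoint ℂ) :=
  (fun z : ℂ => (z : OnePoint ℂ)) '' X

/-- A good cut of `X`. -/
def IsGoodCut (X : Set ℂ) (γ : Set (OnePoint ℂ)) : Prop :=
  IsSimpleClosedCurve γ ∧ (γ ∩ emb (frontier X)).Nonempty ∧
    (γ ∩ emb (frontier X)).Finite ∧ (γ \ emb X).Nonempty

/-- `x` and `y` lie in distinct connected components of `ℂ \ γ`. -/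
def SeparatedBy (γ : Set (OnePoint ℂ)) (x y : ℂ) : Prop :=
  x ∈ {z : ℂ | (z : OnePoint ℂ) ∉ γ} ∧ y ∈ {z : ℂ | (z : OnePoint ℂ) ∉ γ} ∧
    connectedComponentIn {z : ℂ | (z : OnePoint ℂ) ∉ γ} x ≠
      connectedComponentIn {z : ℂ | (z : OnePoint ℂ) ∉ γ} y

/-- The pseudo-fiber `E_x`. -/
def pseudoFiber (X : Set ℂ) (x : ℂ) : Set ℂ :=
  {y | y ∈ X ∧ ¬ ∃ γ : Set (OnePoint ℂ), IsGoodCut X γ ∧ SeparatedBy γ x y}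

/-- The fiber `F_x`. -/
def fiber (X : Set ℂ) (x : ℂ) : Set ℂ :=
  connectedComponentIn (pseudoFiber X x) x


section Helpers
open Metric Filter

/-- In a compact Hausdorff space, a connected component can be separated from a
disjoint closed set by a clopen set. -/
lemma clopen_sep {α : Type*} [TopologicalSpace α] [CompactSpace α] [T2Space α]
    (a : α) {K : Set α} (hK : IsClosed K) (hdisj : Disjoint (connectedComponent a) K) :
    ∃ D : Set α, IsClopen D ∧ connectedComponent a ⊆ D ∧ Disjoint D K := by
  classical
  have hcc : connectedComponent a = ⋂ Z : {Z : Set α // IsClopen Z ∧ a ∈ Z}, (Z : Set α) :=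
    connectedComponent_eq_iInter_isClopen a
  have hcover : K ⊆ ⋃ Z : {Z : Set α // IsClopen Z ∧ a ∈ Z}, ((Z : Set α))ᶜ := by
    intro k hk
    have : k ∉ connectedComponent a := fun h => (Set.disjoint_left.mp hdisj h) hk
    rw [hcc] at this
    simp only [Set.mem_iInter, not_forall] at this
    obtain ⟨Z, hZ⟩ := this
    exact Set.mem_iUnion.mpr ⟨Z, hZ⟩
  obtain ⟨t, ht⟩ := hK.isCompact.elim_finite_subcover _
    (fun Z : {Z : Set α // IsClopen Z ∧ a ∈ Z} => Z.2.1.compl.isOpen) hcover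
  refine ⟨⋂ Z ∈ t, (Z : Set α), isClopen_biInter_finset (fun Z _ => Z.2.1), ?_, ?_⟩
  · intro c hc
    exact Set.mem_iInter₂.mpr fun Z _ => Set.mem_iInter.mp (hcc ▸ hc) Z
  · rw [Set.disjoint_left]
    intro c hc hcK
    obtain ⟨Z, hZt, hZc⟩ := Set.mem_iUnion₂.mp (ht hcK)
    exact hZc (Set.mem_iInter₂.mp hc Z hZt)

/-- Extract a subsequence on which `g` is injective, given all fibers finite. -/
lemma exists_inj_subseq {α : Type*} (g : ℕ → α) (h : ∀ a : α, {n | g n = a}.Finite) :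
    ∃ φ : ℕ → ℕ, StrictMono φ ∧ Function.Injective (g ∘ φ) := by
  classical
  have step : ∀ k : ℕ, ∃ m, k < m ∧ g m ∉ g '' (Set.Iic k) := by
    intro k
    have hfin : {n | g n ∈ g '' (Set.Iic k)}.Finite := by
      have hsub : {n | g n ∈ g '' (Set.Iic k)} ⊆ ⋃ j ∈ Set.Iic k, {n | g n = g j} := by
        intro n hn
        obtain ⟨j, hj, hje⟩ := hn
        exact Set.mem_iUnion₂.mpr ⟨j, hj, hje.symm⟩
      exact ((Set.finite_Iic k).biUnion (fun j _ => h (g j))).subset hsub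
    obtain ⟨b, hb⟩ := hfin.bddAbove
    refine ⟨max k b + 1, by omega, fun hmem => ?_⟩
    have := hb hmem
    omega
  choose nxt hnxt1 hnxt2 using step
  set φ : ℕ → ℕ := fun n => Nat.rec 0 (fun _ prev => nxt prev) n with hφ
  have hsucc : ∀ n, φ (n + 1) = nxt (φ n) := fun n => rfl
  have hmono : StrictMono φ := strictMono_nat_of_lt_succ (fun n => by
    rw [hsucc]; exact hnxt1 (φ n))
  refine ⟨φ, hmono, ?_⟩
  have key : ∀ i j, i < j → g (φ i) ≠ g (φ j) := by
    intro i j hij heq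
    obtain ⟨j', rfl⟩ : ∃ j', j = j' + 1 := ⟨j - 1, by omega⟩
    apply hnxt2 (φ j')
    refine ⟨φ i, hmono.monotone (by omega), ?_⟩
    rw [← hsucc]
    exact heq
  intro i j hij
  by_contra hne
  rcases lt_or_gt_of_ne hne with h' | h'
  · exact key i j h' hij
  · exact key j i h' hij.symm


lemma componentIn_compact {F : Set ℂ} (hF : IsCompact F) (b : ℂ) :
    IsCompact (connectedComponentIn F b) := by
  by_cases hb : b ∈ F
  · rw [connectedComponentIn_eq_image hb]
    haveI : CompactSpace ↥F := isCompact_iff_compactSpace.mp hF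
    exact (isClosed_connectedComponent.isCompact).image continuous_subtype_val
  · rw [connectedComponentIn_eq_empty hb]
    exact isCompact_empty

lemma componentIn_closed {F : Set ℂ} (hF : IsCompact F) (b : ℂ) :
    IsClosed (connectedComponentIn F b) :=
  (componentIn_compact hF b).isClosed

lemma componentIn_disj {α : Type*} [TopologicalSpace α] {F : Set α} {a b : α}
    (hne : connectedComponentIn F a ≠ connectedComponentIn F b) :
    Disjoint (connectedComponentIn F a) (connectedComponentIn F b) := by
  rw [Set.disjoint_left]
  intro c hca hcb
  exact hne ((connectedComponentIn_eq hca).trans (connectedComponentIn_eq hcb).symm)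

/-- Boundary bumping: in a compact connected `X`, the component of a point of
`X ∩ closedBall x r` meets the sphere, provided `X` isn't inside the ball. -/
lemma bump {X : Set ℂ} (hX : IsCompact X) (hXc : IsPreconnected X) {x a : ℂ} {r : ℝ}
    (hnb : ¬ X ⊆ Metric.ball x r) (ha : a ∈ X ∩ Metric.closedBall x r) :
    (connectedComponentIn (X ∩ Metric.closedBall x r) a ∩ Metric.sphere x r).Nonempty := by
  classical
  by_contra hemp
  rw [Set.not_nonempty_iff_eq_empty] at hemp
  set E : Set ℂ := X ∩ Metric.closedBall x r with hE
  have hEc : IsCompact E := hX.inter_right Metric.isClosed_closedBall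
  haveI : CompactSpace ↥E := isCompact_iff_compactSpace.mp hEc
  set ah : ↥E := ⟨a, ha⟩ with hah
  have him : connectedComponentIn E a = Subtype.val '' connectedComponent ah :=
    connectedComponentIn_eq_image ha
  have hdisj : Disjoint (connectedComponent ah) (Subtype.val ⁻¹' Metric.sphere x r) := by
    rw [Set.disjoint_left]
    intro t ht hts
    have : (t : ℂ) ∈ connectedComponentIn E a ∩ Metric.sphere x r :=
      ⟨him ▸ Set.mem_image_of_mem _ ht, hts⟩
    rw [hemp] at this
    exact this
  obtain ⟨D, hDclopen, hDsub, hDdisj⟩ :=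
    clopen_sep ah (Metric.isClosed_sphere.preimage continuous_subtype_val) hdisj
  -- image of D in ℂ
  set Dc : Set ℂ := Subtype.val '' D with hDc
  have hDcsub : Dc ⊆ X ∩ Metric.ball x r := by
    rintro z ⟨t, htD, rfl⟩
    have h1 : (t : ℂ) ∈ E := t.2
    have h2 : (t : ℂ) ∉ Metric.sphere x r := fun hs => Set.disjoint_left.mp hDdisj htD hs
    refine ⟨h1.1, ?_⟩
    rw [Metric.mem_ball]
    rcases lt_or_eq_of_le (Metric.mem_closedBall.mp h1.2) with h | h
    · exact h
    · exact absurd (Metric.mem_sphere.mpr h) h2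
  have hDcclosed : IsClosed Dc :=
    ((hDclopen.isClosed.isCompact).image continuous_subtype_val).isClosed
  obtain ⟨O, hOopen, hOD⟩ := isOpen_induced_iff.mp hDclopen.isOpen
  have hDc_eq : ∀ z ∈ X, (z ∈ Dc ↔ z ∈ O ∩ Metric.ball x r) := by
    intro z hz
    constructor
    · rintro ⟨t, htD, rfl⟩
      refine ⟨?_, (hDcsub ⟨t, htD, rfl⟩).2⟩
      rw [← hOD] at htD
      exact htD
    · rintro ⟨hzO, hzb⟩
      have hzE : z ∈ E := ⟨hz, Metric.ball_subset_closedBall hzb⟩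
      refine ⟨⟨z, hzE⟩, ?_, rfl⟩
      rw [← hOD]
      exact hzO
  haveI : PreconnectedSpace ↥X := Subtype.preconnectedSpace hXc
  set DX : Set ↥X := Subtype.val ⁻¹' Dc with hDX
  have hDXclosed : IsClosed DX := hDcclosed.preimage continuous_subtype_val
  have hDXopen : IsOpen DX := by
    have : DX = Subtype.val ⁻¹' (O ∩ Metric.ball x r) := by
      ext p
      exact hDc_eq p p.2
    rw [this]
    exact (hOopen.inter Metric.isOpen_ball).preimage continuous_subtype_val
  rcases isClopen_iff.mp ⟨hDXclosed, hDXopen⟩ with hcase | hcase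
  · have haD : a ∈ Dc := ⟨ah, hDsub mem_connectedComponent, rfl⟩
    have : (⟨a, ha.1⟩ : ↥X) ∈ DX := haD
    rw [hcase] at this
    exact this
  · apply hnb
    intro z hz
    have : (⟨z, hz⟩ : ↥X) ∈ DX := by rw [hcase]; trivial
    exact (hDcsub this).2

/-- A nested intersection of compact connected sets is preconnected. -/
lemma nested_preconnected (L : ℕ → Set ℂ) (hcpt : ∀ N, IsCompact (L N))
    (hpc : ∀ N, IsPreconnected (L N)) (hnest : ∀ N, L (N + 1) ⊆ L N) :
    IsPreconnected (⋂ N, L N) := by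
  rw [isPreconnected_closed_iff]
  intro t t' htc htc' hcov h1 h2
  by_contra hemp
  rw [Set.not_nonempty_iff_eq_empty] at hemp
  have hKcl : IsClosed (⋂ N, L N) := isClosed_iInter (fun N => (hcpt N).isClosed)
  set A := (⋂ N, L N) ∩ t with hA
  set B := (⋂ N, L N) ∩ t' with hB
  have hAcpt : IsCompact A := (hcpt 0).of_isClosed_subset (hKcl.inter htc)
    ((Set.inter_subset_left).trans (Set.iInter_subset _ 0))
  have hBcl : IsClosed B := hKcl.inter htc'
  have hABdisj : Disjoint A B := by
    rw [Set.disjoint_left]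
    rintro c ⟨hc1, hc2⟩ ⟨hc3, hc4⟩
    have : c ∈ (⋂ N, L N) ∩ (t ∩ t') := ⟨hc1, hc2, hc4⟩
    rw [hemp] at this
    exact this
  obtain ⟨δ, hδ, hUV⟩ := hABdisj.exists_thickenings hAcpt hBcl
  set U := Metric.thickening δ A with hU
  set V := Metric.thickening δ B with hV
  have hsome : ∃ N, L N ⊆ U ∪ V := by
    by_contra hnot
    push_neg at hnot
    have hne : ∀ N, (L N \ (U ∪ V)).Nonempty := by
      intro N
      rw [Set.diff_nonempty]  -- might not be the name
      exact hnot N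
    have h0 : (⋂ N, L N \ (U ∪ V)).Nonempty :=
      IsCompact.nonempty_iInter_of_sequence_nonempty_isCompact_isClosed
        (fun N => L N \ (U ∪ V))
        (fun N => Set.diff_subset_diff_left (hnest N)) hne
        ((hcpt 0).diff (isOpen_thickening.union isOpen_thickening))
        (fun N => (hcpt N).isClosed.sdiff (isOpen_thickening.union isOpen_thickening))
    obtain ⟨c, hc⟩ := h0
    have hc1 : c ∈ ⋂ N, L N := Set.mem_iInter.mpr (fun N => (Set.mem_iInter.mp hc N).1)
    have hc2 : c ∉ U ∪ V := (Set.mem_iInter.mp hc 0).2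
    have hAB : c ∈ A ∪ B := by
      rcases hcov hc1 with h | h
      · exact Or.inl ⟨hc1, h⟩
      · exact Or.inr ⟨hc1, h⟩
    apply hc2
    rcases hAB with h | h
    · exact Or.inl (self_subset_thickening hδ _ h)
    · exact Or.inr (self_subset_thickening hδ _ h)
  obtain ⟨N, hN⟩ := hsome
  have hU1 : (L N ∩ U).Nonempty := by
    obtain ⟨c, hc⟩ := h1
    exact ⟨c, (Set.iInter_subset _ N) hc.1, self_subset_thickening hδ _ ⟨hc.1, hc.2⟩⟩
  have hV1 : (L N ∩ V).Nonempty := by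
    obtain ⟨c, hc⟩ := h2
    exact ⟨c, (Set.iInter_subset _ N) hc.1, self_subset_thickening hδ _ ⟨hc.1, hc.2⟩⟩
  obtain ⟨c, hc⟩ := hpc N U V isOpen_thickening isOpen_thickening hN hU1 hV1
  exact Set.disjoint_left.mp hUV hc.2.1 hc.2.2

end Helpers

section Crossing

open Metric Filter

/-- interval from 0 to θ, excluding 0. -/
def oc (θ : ℝ) : Set ℝ := Set.Ioc 0 θ ∪ Set.Ico θ 0

lemma oc_mem {θ : ℝ} (h : θ ≠ 0) : θ ∈ oc θ := by
  rcases lt_or_gt_of_ne h with h' | h'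
  · exact Or.inr ⟨le_refl θ, h'⟩
  · exact Or.inl ⟨h', le_refl θ⟩

lemma oc_ne {θ t : ℝ} (ht : t ∈ oc θ) : t ≠ 0 := by
  rcases ht with h | h
  · exact ne_of_gt h.1
  · exact ne_of_lt h.2

lemma oc_abs {θ t : ℝ} (ht : t ∈ oc θ) : |t| ≤ |θ| := by
  rcases ht with h | h
  · rw [abs_of_pos h.1, abs_of_pos (lt_of_lt_of_le h.1 h.2)]; exact h.2
  · rw [abs_of_neg h.2, abs_of_neg (lt_of_le_of_lt h.1 h.2)]; exact neg_le_neg h.1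

lemma oc_preconnected (θ : ℝ) : IsPreconnected (oc θ) := by
  rcases le_or_gt θ 0 with h | h
  · have he : Set.Ioc (0:ℝ) θ = ∅ := Set.Ioc_eq_empty (not_lt.mpr h)
    rw [oc, he, Set.empty_union]
    exact isPreconnected_Ico
  · have he : Set.Ico θ (0:ℝ) = ∅ := Set.Ico_eq_empty (not_lt.mpr h.le)
    rw [oc, he, Set.union_empty]
    exact isPreconnected_Ioc

lemma oc_closure {θ : ℝ} (h : θ ≠ 0) : (0:ℝ) ∈ closure (oc θ) := by
  rcases lt_or_gt_of_ne h with h' | h'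
  · have he : Set.Ioc (0:ℝ) θ = ∅ := Set.Ioc_eq_empty (not_lt.mpr h'.le)
    rw [oc, he, Set.empty_union, closure_Ico h]
    exact ⟨h'.le, le_refl 0⟩
  · have he : Set.Ico θ (0:ℝ) = ∅ := Set.Ico_eq_empty (not_lt.mpr h'.le)
    rw [oc, he, Set.union_empty, closure_Ioc (ne_of_gt h').symm]
    exact ⟨le_refl 0, h'.le⟩

/-- The key crossing analysis: if a good cut separates `x` from `z`, and infinitely many
pairwise-disjoint components of `X ∩ closedBall x r` approximate both `x` and `z`,
then the cut meets `frontier X` at a point at distance exactly `r` from `x`. -/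
lemma crossing {X : Set ℂ} (hX : IsCompact X)
    {x z : ℂ} {γ : Set (OnePoint ℂ)} (hγ : IsGoodCut X γ) (hsep : SeparatedBy γ x z)
    {r : ℝ} {D : ℕ → Set ℂ} {a p q : ℕ → ℂ}
    (hD : ∀ j, D j = connectedComponentIn (X ∩ Metric.closedBall x r) (a j))
    (hdisj : ∀ i j, i ≠ j → Disjoint (D i) (D j))
    (hp : ∀ j, p j ∈ D j) (hq : ∀ j, q j ∈ D j)
    (hpx : Filter.Tendsto p Filter.atTop (𝓝 x))
    (hqz : Filter.Tendsto q Filter.atTop (𝓝 z)) :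
    ∃ v : ℂ, v ∈ frontier X ∧ (v : OnePoint ℂ) ∈ γ ∧ dist v x = r := by
  classical
  obtain ⟨hxγ, hzγ, hneq⟩ := hsep
  -- curve data
  obtain ⟨f, hfc, hfinj, hγr⟩ := hγ.1
  haveI : CompactSpace ↥(Metric.sphere (0:ℂ) 1) :=
    isCompact_iff_compactSpace.mp (isCompact_sphere 0 1)
  have hγcpt : IsCompact γ := hγr ▸ isCompact_range hfc
  have hγcl : IsClosed γ := hγcpt.isClosed
  set Γ : Set ℂ := {c : ℂ | (c : OnePoint ℂ) ∉ γ} with hΓ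
  have hΓopen : IsOpen Γ := by
    have : Γ = (fun c : ℂ => (c : OnePoint ℂ)) ⁻¹' γᶜ := rfl
    rw [this]
    exact hγcl.isOpen_compl.preimage OnePoint.continuous_coe
  set Ω1 := connectedComponentIn Γ x with hΩ1
  set Ω2 := connectedComponentIn Γ z with hΩ2
  have hΩ1open : IsOpen Ω1 := hΓopen.connectedComponentIn
  have hΩ2open : IsOpen Ω2 := hΓopen.connectedComponentIn
  have hΩdisj : Disjoint Ω1 Ω2 := componentIn_disj hneq
  -- eventually p q in the components
  have hev : ∀ᶠ j in Filter.atTop, p j ∈ Ω1 ∧ q j ∈ Ω2 :=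
    (hpx.eventually_mem (hΩ1open.mem_nhds (mem_connectedComponentIn hxγ))).and
      (hqz.eventually_mem (hΩ2open.mem_nhds (mem_connectedComponentIn hzγ)))
  obtain ⟨J0, hJ0⟩ := Filter.eventually_atTop.mp hev
  -- crossing points
  have hcross : ∀ j, ∃ c, c ∈ D (j + J0) ∧ (c : OnePoint ℂ) ∈ γ := by
    intro j
    by_contra hno
    push_neg at hno
    have hsubΓ : D (j + J0) ⊆ Γ := fun c hc => hno c hc
    have hpre : IsPreconnected (D (j + J0)) := by
      rw [hD]; exact isPreconnected_connectedComponentIn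
    have h1 : D (j + J0) ⊆ Ω1 := by
      have h2 := hpre.subset_connectedComponentIn (hp (j + J0)) hsubΓ
      rwa [← connectedComponentIn_eq (show p (j + J0) ∈ Ω1 from (hJ0 _ (Nat.le_add_left _ _)).1)] at h2
    exact Set.disjoint_left.mp hΩdisj (h1 (hq (j + J0))) (hJ0 _ (Nat.le_add_left _ _)).2
  choose W hW1 hW2 using hcross
  have hWin : ∀ j, W j ∈ (X ∩ Metric.closedBall x r) ∩ Γᶜ := by
    intro j
    refine ⟨?_, fun hc => hc (hW2 j)⟩
    have := hW1 j
    rw [hD] at this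
    exact connectedComponentIn_subset _ _ this
  have hcpt2 : IsCompact ((X ∩ Metric.closedBall x r) ∩ Γᶜ) :=
    (hX.inter_right Metric.isClosed_closedBall).inter_right (hΓopen.isClosed_compl)
  obtain ⟨v, hvmem, φ, hφmono, hφtend⟩ := hcpt2.tendsto_subseq hWin
  have hvX : v ∈ X := hvmem.1.1
  have hvball : dist v x ≤ r := hvmem.1.2
  have hvγ : (v : OnePoint ℂ) ∈ γ := not_not.mp hvmem.2
  -- the reindexed crossing sequence
  set W' : ℕ → ℂ := W ∘ φ with hW'
  set ι : ℕ → ℕ := fun j => φ j + J0 with hι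
  have hιinj : Function.Injective ι := fun i j h => hφmono.injective (Nat.add_right_cancel h)
  have hW'mem : ∀ j, W' j ∈ D (ι j) := fun j => hW1 (φ j)
  have hW'γ : ∀ j, (W' j : OnePoint ℂ) ∈ γ := fun j => hW2 (φ j)
  have hW'X : ∀ j, W' j ∈ X ∩ Metric.closedBall x r := fun j => (hWin (φ j)).1
  have hW'inj : Function.Injective W' := by
    intro i j hij
    by_contra hne
    exact Set.disjoint_left.mp (hdisj _ _ (fun h => hne (hιinj h)))
      (hW'mem i) (hij ▸ hW'mem j)
  -- interior case: contradiction
  by_cases hvint : v ∈ interior X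
  · exfalso
    obtain ⟨η, hη, hball⟩ := Metric.isOpen_iff.mp isOpen_interior v hvint
    set V := Metric.ball v η ∩ Metric.closedBall x r with hV
    have hVpre : IsPreconnected V := ((convex_ball v η).inter (convex_closedBall x r)).isPreconnected
    have hVsub : V ⊆ X ∩ Metric.closedBall x r :=
      Set.inter_subset_inter (hball.trans interior_subset) (le_refl _)
    have hWV : ∀ᶠ j in Filter.atTop, W' j ∈ V := by
      filter_upwards [hφtend.eventually_mem (Metric.isOpen_ball.mem_nhds (Metric.mem_ball_self hη))] with j hj
      exact ⟨hj, (hW'X j).2⟩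
    obtain ⟨J, hJ⟩ := Filter.eventually_atTop.mp hWV
    have key : ∀ j, W' j ∈ V → V ⊆ D (ι j) := by
      intro j hj
      have h1 : V ⊆ connectedComponentIn (X ∩ Metric.closedBall x r) (W' j) :=
        hVpre.subset_connectedComponentIn hj hVsub
      have h2 : connectedComponentIn (X ∩ Metric.closedBall x r) (W' j) = D (ι j) := by
        rw [hD]
        exact (connectedComponentIn_eq (by rw [← hD]; exact hW'mem j)).symm
      rwa [h2] at h1
    have hmem1 : W' (J + 1) ∈ D (ι J) := key J (hJ J (le_refl J)) (hJ (J + 1) (by omega))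
    exact Set.disjoint_left.mp (hdisj (ι J) (ι (J+1)) (fun h => by
        have := hιinj h; omega)) hmem1 (hW'mem (J+1))
  -- v is a frontier point
  have hvfr : v ∈ frontier X := by
    rw [hX.isClosed.frontier_eq]
    exact ⟨hvX, hvint⟩
  by_cases hvr : dist v x = r
  · exact ⟨v, hvfr, hvγ, hvr⟩
  exfalso
  have hvlt : dist v x < r := lt_of_le_of_ne hvball hvr
  set ρ : ℝ := r - dist v x with hρdef
  have hρ : 0 < ρ := by simp [hρdef]; linarith
  -- only finitely many crossings on the frontier
  have hWfr : {j | W' j ∈ frontier X}.Finite := by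
    by_contra hinf
    have hinf' : {j | W' j ∈ frontier X}.Infinite := hinf
    haveI := hinf'.to_subtype
    have hinj2 : Function.Injective (fun j : {j | W' j ∈ frontier X} => ((W' j : ℂ) : OnePoint ℂ)) := by
      intro i j hij
      have : W' i = W' j := OnePoint.coe_injective hij
      exact Subtype.ext (hW'inj this)
    have : (γ ∩ emb (frontier X)).Infinite :=
      Set.infinite_of_injective_forall_mem hinj2
        (fun j => ⟨hW'γ j, Set.mem_image_of_mem _ j.2⟩)
    exact this hγ.2.2.1
  obtain ⟨J1, hJ1⟩ : ∃ J1, ∀ j, J1 ≤ j → W' j ∈ interior X := by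
    obtain ⟨b, hb⟩ := hWfr.bddAbove
    refine ⟨b + 1, fun j hj => ?_⟩
    have hnotfr : W' j ∉ frontier X := fun h => by
      have := hb (Set.mem_setOf.mpr h); omega
    by_contra hint
    apply hnotfr
    rw [hX.isClosed.frontier_eq]
    exact ⟨(hW'X j).1, hint⟩
  -- homeomorphism with the circle
  set e : ↥(Metric.sphere (0:ℂ) 1) ≃ ↥γ :=
    (Equiv.ofInjective f hfinj).trans (Equiv.setCongr hγr.symm) with he
  have hecont : Continuous e := by
    have : Continuous (fun t : ↥(Metric.sphere (0:ℂ) 1) =>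
        (⟨f t, by rw [hγr]; exact Set.mem_range_self t⟩ : ↥γ)) := hfc.subtype_mk _
    convert this using 1
    rfl
  set h : ↥(Metric.sphere (0:ℂ) 1) ≃ₜ ↥γ := hecont.homeoOfEquivCompactToT2 with hh
  have hfh : ∀ pt : ↥γ, f (h.symm pt) = ↑pt := by
    intro pt
    have h1 : h (h.symm pt) = pt := h.apply_symm_apply pt
    have h2 : (h (h.symm pt) : OnePoint ℂ) = ↑pt := congrArg Subtype.val h1
    exact h2
  set s : ↥(Metric.sphere (0:ℂ) 1) := h.symm ⟨(v : OnePoint ℂ), hvγ⟩ with hsdef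
  have hfs : f s = (v : OnePoint ℂ) := hfh _
  set sj : ℕ → ↥(Metric.sphere (0:ℂ) 1) := fun j => h.symm ⟨((W' j : ℂ) : OnePoint ℂ), hW'γ j⟩ with hsj
  have hfsj : ∀ j, f (sj j) = ((W' j : ℂ) : OnePoint ℂ) := fun j => hfh _
  have hsjtend : Filter.Tendsto sj Filter.atTop (𝓝 s) := by
    apply (h.symm.continuous.tendsto _).comp
    rw [tendsto_subtype_rng]
    exact (OnePoint.continuous_coe.tendsto v).comp hφtend
  set u : ℂ := (s : ℂ) with hu
  have habs_s : ∀ t : ↥(Metric.sphere (0:ℂ) 1), ‖(t : ℂ)‖ = 1 := by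
    intro t
    have := t.2
    rw [Metric.mem_sphere, Complex.dist_eq, sub_zero] at this
    exact this
  have hu1 : ‖u‖ = 1 := habs_s s
  have hune : u ≠ 0 := by
    intro h0
    rw [h0] at hu1
    simp at hu1
  set uj : ℕ → ℂ := fun j => ((sj j : ℂ)) with huj
  have hujtend : Filter.Tendsto uj Filter.atTop (𝓝 u) :=
    (continuous_subtype_val.tendsto s).comp hsjtend
  set θ : ℕ → ℝ := fun j => Complex.arg (uj j / u) with hθ
  have hθtend : Filter.Tendsto θ Filter.atTop (𝓝 0) := by
    have h1 : Filter.Tendsto (fun j => uj j / u) Filter.atTop (𝓝 (u / u)) := hujtend.div_const u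
    rw [div_self hune] at h1
    have harg : ContinuousAt Complex.arg 1 :=
      Complex.continuousAt_arg (Complex.mem_slitPlane_iff.mpr (Or.inl (by norm_num)))
    have := harg.tendsto.comp h1
    rwa [Complex.arg_one] at this
  have hukey : ∀ j, uj j = u * Complex.exp (θ j * Complex.I) := by
    intro j
    have habs : ‖uj j / u‖ = 1 := by
      rw [norm_div, hu1, habs_s (sj j), div_one]
    have hkey := Complex.norm_mul_exp_arg_mul_I (uj j / u)
    rw [habs] at hkey
    push_cast at hkey
    rw [one_mul] at hkey
    field_simp at hkey
    rw [← hkey]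
  -- avoid the finite bad set
  set T : Set ↥(Metric.sphere (0:ℂ) 1) :=
    {t | (f t ∈ emb (frontier X) ∧ f t ≠ (v : OnePoint ℂ)) ∨ f t = ∞} with hT
  have hTfin : T.Finite := by
    have hsub : T ⊆ f ⁻¹' ((γ ∩ emb (frontier X)) ∪ {∞}) := by
      intro t ht
      rcases ht with ⟨h1, _⟩ | h1
      · exact Or.inl ⟨hγr ▸ Set.mem_range_self t, h1⟩
      · exact Or.inr h1
    exact (Set.Finite.preimage hfinj.injOn (hγ.2.2.1.union (Set.finite_singleton _))).subset hsub
  have hsT : s ∉ T := by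
    intro hmem
    rcases hmem with ⟨_, hne⟩ | hinf
    · exact hne hfs
    · rw [hfs] at hinf
      exact OnePoint.coe_ne_infty v hinf
  obtain ⟨δ0, hδ0, hδball⟩ := Metric.isOpen_iff.mp (hTfin.isClosed.isOpen_compl) s hsT
  -- parametrization of small arcs
  have hgmem : ∀ t : ℝ, u * Complex.exp ((t : ℂ) * Complex.I) ∈ Metric.sphere (0:ℂ) 1 := by
    intro t
    rw [Metric.mem_sphere, Complex.dist_eq, sub_zero, norm_mul, hu1,
      Complex.norm_exp_ofReal_mul_I, one_mul]
  set g : ℝ → ↥(Metric.sphere (0:ℂ) 1) := fun t => ⟨u * Complex.exp ((t : ℂ) * Complex.I), hgmem t⟩ with hgdef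
  have hgcont : Continuous g := by
    apply Continuous.subtype_mk
    exact continuous_const.mul ((Complex.continuous_ofReal.mul continuous_const).cexp)
  have hg0 : g 0 = s := by
    apply Subtype.ext
    show u * Complex.exp ((0:ℝ) * Complex.I) = u
    simp
  have hgdist : ∀ t : ℝ, |t| ≤ 1 → dist (g t) s ≤ 2 * |t| := by
    intro t ht
    rw [Subtype.dist_eq]
    show dist (u * Complex.exp ((t:ℂ) * Complex.I)) u ≤ 2 * |t|
    rw [Complex.dist_eq]
    have : u * Complex.exp ((t:ℂ) * Complex.I) - u = u * (Complex.exp ((t:ℂ) * Complex.I) - 1) := by ring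
    rw [this, norm_mul, hu1, one_mul]
    have habs : ‖(t:ℂ) * Complex.I‖ = |t| := by
      rw [norm_mul, Complex.norm_I, mul_one, Complex.norm_real, Real.norm_eq_abs]
    calc ‖Complex.exp ((t:ℂ) * Complex.I) - 1‖
        ≤ 2 * ‖(t:ℂ) * Complex.I‖ := Complex.norm_exp_sub_one_le (by rw [habs]; exact ht)
      _ = 2 * |t| := by rw [habs]
  have hginj : ∀ t : ℝ, t ≠ 0 → |t| ≤ 1 → g t ≠ s := by
    intro t ht ht1 heq
    have : u * Complex.exp ((t:ℂ) * Complex.I) = u := congrArg Subtype.val heq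
    have hexp : Complex.exp ((t:ℂ) * Complex.I) = 1 := by
      field_simp at this
      tauto
    rw [Complex.exp_eq_one_iff] at hexp
    obtain ⟨n, hn⟩ := hexp
    have : (t:ℂ) = (n:ℂ) * (2 * Real.pi) := by
      have hI : ((t:ℂ)) * Complex.I = ((n:ℂ) * (2 * Real.pi)) * Complex.I := by
        rw [hn]; ring
      exact mul_right_cancel₀ Complex.I_ne_zero hI
    have htr : t = (n:ℝ) * (2 * Real.pi) := by
      exact_mod_cast this
    rcases eq_or_ne n 0 with h | h
    · rw [h] at htr
      simp at htr
      exact ht htr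
    · have h1 : (1:ℝ) ≤ |(n:ℝ)| := by exact_mod_cast Int.one_le_abs h
      have h2 : |t| = |(n:ℝ)| * (2 * Real.pi) := by
        rw [htr, abs_mul]
        congr 1
        rw [abs_of_pos (by positivity)]
      nlinarith [Real.pi_gt_three]
  -- open pieces of the complement of emb (frontier X)
  set O1 : Set (OnePoint ℂ) := emb (interior X) with hO1
  set O2 : Set (OnePoint ℂ) := (emb X)ᶜ with hO2
  have hO1open : IsOpen O1 := OnePoint.isOpen_image_coe.mpr isOpen_interior
  have hO2open : IsOpen O2 := by
    show IsOpen (((fun z : ℂ => (z : OnePoint ℂ)) '' X)ᶜ)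
    exact OnePoint.isOpen_compl_image_coe.mpr ⟨hX.isClosed, hX⟩
  have hO12 : Disjoint O1 O2 := by
    rw [Set.disjoint_left]
    rintro pt ⟨c, hc, rfl⟩ h2
    exact h2 ⟨c, interior_subset hc, rfl⟩
  -- the eventual smallness facts
  have hsmall : ∀ᶠ j in Filter.atTop, |θ j| ≤ 1 ∧ 2 * |θ j| < δ0 ∧ J1 ≤ j := by
    have h1 : ∀ᶠ j in Filter.atTop, |θ j| < min 1 (δ0 / 2) := by
      have := hθtend.eventually_mem (Metric.isOpen_ball.mem_nhds
        (Metric.mem_ball_self (by positivity : (0:ℝ) < min 1 (δ0/2))))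
      filter_upwards [this] with j hj
      rwa [Metric.mem_ball, Real.dist_eq, sub_zero] at hj
    filter_upwards [h1, Filter.eventually_ge_atTop J1] with j hj hj1
    refine ⟨le_of_lt (lt_of_lt_of_le hj (min_le_left _ _)), ?_, hj1⟩
    have := lt_of_lt_of_le hj (min_le_right _ _)
    linarith
  -- distance control: eventually all points of the arc are within ρ/2 of v
  have hE2 : ∀ᶠ j in Filter.atTop, ∀ c : ℂ,
      ((c : OnePoint ℂ) ∈ f '' (g '' oc (θ j))) → dist c v ≤ ρ / 2 := by
    by_contra hno
    rw [Filter.not_eventually] at hno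
    have hno' : ∃ᶠ j in Filter.atTop, ∃ c : ℂ,
        ((c : OnePoint ℂ) ∈ f '' (g '' oc (θ j))) ∧ ρ / 2 < dist c v := by
      apply hno.mono
      intro j hj
      push_neg at hj
      exact hj
    obtain ⟨ψ, hψmono, hψ⟩ := Filter.extraction_of_frequently_atTop hno'
    choose c hc1 hc2 using hψ
    have hc1' : ∀ n, ∃ t ∈ oc (θ (ψ n)), f (g t) = ((c n : ℂ) : OnePoint ℂ) := by
      intro n
      obtain ⟨t', ⟨t0, ht0, rfl⟩, h2⟩ := hc1 n
      exact ⟨t0, ht0, h2⟩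
    choose t ht1 ht2 using hc1'
    have httend : Filter.Tendsto t Filter.atTop (𝓝 0) := by
      have hnorm : Filter.Tendsto (fun n => ‖(θ ∘ ψ) n‖) Filter.atTop (𝓝 0) := by
        have := (hθtend.comp (hψmono.tendsto_atTop)).norm
        rwa [norm_zero] at this
      apply squeeze_zero_norm (fun n => ?_) hnorm
      exact oc_abs (ht1 n)
    have hgt : Filter.Tendsto (fun n => g (t n)) Filter.atTop (𝓝 s) := by
      have := (hgcont.tendsto 0).comp httend
      rwa [hg0] at this
    have hfgt : Filter.Tendsto (fun n => f (g (t n))) Filter.atTop (𝓝 ((v : OnePoint ℂ))) := by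
      have := (hfc.tendsto s).comp hgt
      rwa [hfs] at this
    have hcv : Filter.Tendsto c Filter.atTop (𝓝 v) := by
      rw [(OnePoint.isOpenEmbedding_coe).isInducing.tendsto_nhds_iff]
      have : ((fun c : ℂ => (c : OnePoint ℂ)) ∘ c) = fun n => f (g (t n)) := by
        funext n
        exact (ht2 n).symm
      rw [this]
      exact hfgt
    have := hcv.eventually_mem (Metric.isOpen_ball.mem_nhds (Metric.mem_ball_self (by positivity : (0:ℝ) < ρ/2)))
    obtain ⟨n, hn⟩ := (this.and (Filter.eventually_ge_atTop 0)).exists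
    have hd := hc2 n
    rw [Metric.mem_ball] at hn
    have := hn.1
    linarith
  -- main per-index conclusion: v belongs to D (ι j)
  have main : ∀ j, |θ j| ≤ 1 → 2 * |θ j| < δ0 → J1 ≤ j →
      (∀ c : ℂ, ((c : OnePoint ℂ) ∈ f '' (g '' oc (θ j))) → dist c v ≤ ρ / 2) →
      v ∈ D (ι j) := by
    intro j hθ1 hθδ hjJ1 hdist
    have hWint : W' j ∈ interior X := hJ1 j hjJ1
    have hWne : W' j ≠ v := fun hWv => hvint (hWv ▸ hWint)
    have hsjne : sj j ≠ s := by
      intro hss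
      apply hWne
      have h1 : ((W' j : ℂ) : OnePoint ℂ) = (v : OnePoint ℂ) := by
        rw [← hfsj j, ← hfs, hss]
      exact OnePoint.coe_injective h1
    have hθne : θ j ≠ 0 := by
      intro h0
      apply hsjne
      apply Subtype.ext
      show uj j = u
      rw [hukey j, h0]
      simp
    have hsjg : g (θ j) = sj j := by
      apply Subtype.ext
      show u * Complex.exp ((θ j : ℂ) * Complex.I) = uj j
      rw [hukey j]
    -- the arc avoids T and s
    have havoid : ∀ t ∈ oc (θ j), g t ∉ T ∧ g t ≠ s := by
      intro t ht
      have habs : |t| ≤ |θ j| := oc_abs ht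
      have ht1 : |t| ≤ 1 := le_trans habs hθ1
      constructor
      · intro hmem
        have : g t ∈ Metric.ball s δ0 := by
          rw [Metric.mem_ball]
          calc dist (g t) s ≤ 2 * |t| := hgdist t ht1
            _ ≤ 2 * |θ j| := by linarith
            _ < δ0 := hθδ
        exact hδball this hmem
      · exact hginj t (oc_ne ht) ht1
    -- the arc stays in the interior of X
    set Sset : Set (OnePoint ℂ) := f '' (g '' oc (θ j)) with hSset
    have hSpre : IsPreconnected Sset :=
      (((oc_preconnected (θ j)).image _ hgcont.continuousOn).image _ hfc.continuousOn)
    have hScover : Sset ⊆ O1 ∪ O2 := by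
      rintro pt ⟨t', ⟨t0, ht0, rfl⟩, rfl⟩
      obtain ⟨hnT, hns⟩ := havoid t0 ht0
      have hnfr : f (g t0) ∉ emb (frontier X) := by
        intro hmem
        apply hnT
        left
        refine ⟨hmem, ?_⟩
        intro heq
        rw [← hfs] at heq
        exact hns (hfinj heq)
      have hninf : f (g t0) ≠ ∞ := fun heq => hnT (Or.inr heq)
      rcases pt' : f (g t0) with _ | c
      · exact absurd pt' hninf
      · by_cases hcX : c ∈ X
        · left
          refine ⟨c, ?_, rfl⟩
          by_contra hcint
          apply hnfr
          rw [pt']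
          refine ⟨c, ?_, rfl⟩
          rw [hX.isClosed.frontier_eq]
          exact ⟨hcX, hcint⟩
        · right
          rintro ⟨d, hd, hdc⟩
          exact hcX (OnePoint.coe_injective hdc ▸ hd)
    have hSne : (Sset ∩ O1).Nonempty := by
      refine ⟨((W' j : ℂ) : OnePoint ℂ), ?_, ⟨W' j, hWint, rfl⟩⟩
      rw [← hfsj j, ← hsjg]
      exact ⟨g (θ j), ⟨θ j, oc_mem hθne, rfl⟩, rfl⟩
    have hSsub : Sset ⊆ O1 :=
      IsPreconnected.subset_left_of_subset_union hO1open hO2open hO12 hScover hSne hSpre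
    -- pull back to ℂ
    set σc : Set ℂ := (fun c : ℂ => (c : OnePoint ℂ)) ⁻¹' Sset with hσc
    have hσcsub : σc ⊆ interior X := by
      intro c hc
      obtain ⟨d, hd, hdc⟩ := hSsub hc
      exact OnePoint.coe_injective hdc ▸ hd
    have hSrange : Sset ⊆ Set.range (fun c : ℂ => (c : OnePoint ℂ)) := by
      intro pt hpt
      obtain ⟨d, _, hdc⟩ := hSsub hpt
      exact ⟨d, hdc⟩
    have himg : (fun c : ℂ => (c : OnePoint ℂ)) '' σc = Sset :=
      Set.image_preimage_eq_of_subset hSrange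
    have hσcpre : IsPreconnected σc := by
      rw [← OnePoint.isOpenEmbedding_coe.isInducing.isPreconnected_image]
      rw [himg]
      exact hSpre
    have hWσ : W' j ∈ σc := by
      show ((W' j : ℂ) : OnePoint ℂ) ∈ Sset
      rw [← hfsj j, ← hsjg]
      exact ⟨g (θ j), ⟨θ j, oc_mem hθne, rfl⟩, rfl⟩
    have hvclos : v ∈ closure σc := by
      have h0c : (0:ℝ) ∈ closure (oc (θ j)) := oc_closure hθne
      have h1 : s ∈ closure (g '' oc (θ j)) := by
        have := mem_closure_image hgcont.continuousAt h0c
        rwa [hg0] at this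
      have h2 : ((v : OnePoint ℂ)) ∈ closure Sset := by
        have := mem_closure_image hfc.continuousAt h1
        rwa [hfs] at this
      have h3 := OnePoint.isOpenEmbedding_coe.isInducing.closure_eq_preimage_closure_image σc
      rw [h3, himg]
      exact h2
    set σ : Set ℂ := insert v σc with hσ
    have hσpre : IsPreconnected σ :=
      hσcpre.subset_closure (Set.subset_insert _ _)
        (Set.insert_subset hvclos subset_closure)
    have hσsub : σ ⊆ X ∩ Metric.closedBall x r := by
      intro c hc
      rcases hc with rfl | hc
      · exact ⟨hvX, Metric.mem_closedBall.mpr hvball⟩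
      · refine ⟨interior_subset (hσcsub hc), ?_⟩
        rw [Metric.mem_closedBall]
        have hd1 : dist c v ≤ ρ / 2 := hdist c hc
        calc dist c x ≤ dist c v + dist v x := dist_triangle c v x
          _ ≤ ρ / 2 + (r - ρ) := by rw [hρdef]; linarith
          _ ≤ r := by linarith
    have hfinal : σ ⊆ D (ι j) := by
      have h1 : σ ⊆ connectedComponentIn (X ∩ Metric.closedBall x r) (W' j) :=
        hσpre.subset_connectedComponentIn (Set.mem_insert_of_mem _ hWσ) hσsub
      have h2 : connectedComponentIn (X ∩ Metric.closedBall x r) (W' j) = D (ι j) := by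
        rw [hD]
        exact (connectedComponentIn_eq (by rw [← hD]; exact hW'mem j)).symm
      rwa [h2] at h1
    exact hfinal (Set.mem_insert v σc)
  -- two distinct indices give the contradiction
  obtain ⟨J2, hJ2⟩ := Filter.eventually_atTop.mp (hsmall.and hE2)
  have hv1 : v ∈ D (ι J2) := by
    obtain ⟨⟨ha1, ha2, ha3⟩, hb⟩ := hJ2 J2 (le_refl J2)
    exact main J2 ha1 ha2 ha3 hb
  have hv2 : v ∈ D (ι (J2 + 1)) := by
    obtain ⟨⟨ha1, ha2, ha3⟩, hb⟩ := hJ2 (J2 + 1) (by omega)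
    exact main (J2 + 1) ha1 ha2 ha3 hb
  exact Set.disjoint_left.mp (hdisj (ι J2) (ι (J2 + 1))
    (fun heq => by have := hιinj heq; omega)) hv1 hv2

end Crossing

section Main

open Metric Filter

lemma one_div_nat_le {i j : ℕ} (h : i ≤ j) : 1 / ((j:ℝ) + 1) ≤ 1 / ((i:ℝ) + 1) := by
  apply one_div_le_one_div_of_le (by positivity)
  have : (i:ℝ) ≤ (j:ℝ) := by exact_mod_cast h
  linarith

/-- if `X` is not locally connected at `x`, then the fiber `F_x`
is nontrivial. -/
theorem stmt_3 (X : Set ℂ) (hcomp : IsCompact X) (hconn : IsConnected X)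
    (hfin : (comps (Xᶜ : Set ℂ)).Finite) (x : ℂ) (hx : x ∈ X)
    (hnlc : ∃ U ∈ 𝓝 (⟨x, hx⟩ : X), ∀ V ∈ 𝓝 (⟨x, hx⟩ : X), V ⊆ U → ¬ IsConnected V) :
    fiber X x ≠ {x} := by
  classical
  obtain ⟨U, hU, hP⟩ := hnlc
  obtain ⟨t, ht, htU⟩ := (mem_nhds_subtype X ⟨x, hx⟩ U).mp hU
  obtain ⟨ε, hε, hball⟩ := Metric.mem_nhds_iff.mp ht
  set R : ℝ := ε / 2 with hR
  have hR0 : 0 < R := by positivity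
  have hRε : R < ε := by rw [hR]; linarith
  -- the component of x in X ∩ closedBall x r is never a neighborhood of x in X
  have hnotnbhd : ∀ r : ℝ, 0 < r → r ≤ R →
      ¬ ((Subtype.val ⁻¹' connectedComponentIn (X ∩ Metric.closedBall x r) x : Set ↥X)
          ∈ 𝓝 (⟨x, hx⟩ : X)) := by
    intro r hr0 hrR hmem
    refine hP _ hmem ?_ ?_
    · intro w hw
      apply htU
      apply hball
      have hw2 : (w : ℂ) ∈ X ∩ Metric.closedBall x r := connectedComponentIn_subset _ _ hw
      have : dist (w : ℂ) x ≤ r := hw2.2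
      exact Metric.mem_ball.mpr (lt_of_le_of_lt this (lt_of_le_of_lt hrR hRε))
    · constructor
      · exact ⟨⟨x, hx⟩, mem_connectedComponentIn ⟨hx, Metric.mem_closedBall_self hr0.le⟩⟩
      · have h1 : IsPreconnected (connectedComponentIn (X ∩ Metric.closedBall x r) x) :=
          isPreconnected_connectedComponentIn
        have hsubX : connectedComponentIn (X ∩ Metric.closedBall x r) x ⊆ Set.range (Subtype.val : ↥X → ℂ) := by
          intro c hc
          exact ⟨⟨c, (connectedComponentIn_subset _ _ hc).1⟩, rfl⟩
        have h2 : Subtype.val '' (Subtype.val ⁻¹' connectedComponentIn (X ∩ Metric.closedBall x r) x : Set ↥X)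
            = connectedComponentIn (X ∩ Metric.closedBall x r) x :=
          Set.image_preimage_eq_of_subset hsubX
        rw [← Topology.IsInducing.subtypeVal.isPreconnected_image, h2]
        exact h1
  -- a sequence of points near x missing the component of x
  set R2 : ℝ := R / 2 with hR2
  have hR20 : 0 < R2 := by positivity
  have hxseq : ∀ n : ℕ, ∃ c, c ∈ X ∧ dist c x < min (1 / ((n:ℝ) + 1)) R2 ∧
      c ∉ connectedComponentIn (X ∩ Metric.closedBall x R) x := by
    intro n
    by_contra hcon
    push_neg at hcon
    apply hnotnbhd R hR0 (le_refl R)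
    rw [Metric.mem_nhds_iff]
    refine ⟨min (1 / ((n:ℝ) + 1)) R2, lt_min (by positivity) hR20, ?_⟩
    intro w hw
    rw [Metric.mem_ball, Subtype.dist_eq] at hw
    exact hcon (w : ℂ) w.2 hw
  choose xs hxsX hxsd hxsC using hxseq
  have hxstend : Filter.Tendsto xs Filter.atTop (𝓝 x) := by
    rw [tendsto_iff_dist_tendsto_zero]
    apply squeeze_zero (fun n => dist_nonneg)
      (fun n => le_of_lt (lt_of_lt_of_le (hxsd n) (min_le_left _ _)))
    exact tendsto_one_div_add_atTop_nhds_zero_nat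
  have hxsC2 : ∀ n : ℕ, ∀ r : ℝ, r ≤ R →
      xs n ∉ connectedComponentIn (X ∩ Metric.closedBall x r) x := by
    intro n r hrR hmem
    apply hxsC n
    exact connectedComponentIn_mono x
      (Set.inter_subset_inter (le_refl _) (Metric.closedBall_subset_closedBall hrR)) hmem
  have hnotball : ∀ r : ℝ, 0 < r → r ≤ R → ¬ X ⊆ Metric.ball x r := by
    intro r h0 hrR hsub
    apply hxsC2 0 r hrR
    have heq : X ∩ Metric.closedBall x r = X :=
      Set.inter_eq_left.mpr (hsub.trans Metric.ball_subset_closedBall)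
    rw [heq]
    exact (hconn.isPreconnected.subset_connectedComponentIn hx (le_refl X)) (hxsX 0)
  -- components
  set C : ℕ → Set ℂ := fun n => connectedComponentIn (X ∩ Metric.closedBall x R2) (xs n) with hC
  have hxsmem : ∀ n, xs n ∈ X ∩ Metric.closedBall x R2 := fun n =>
    ⟨hxsX n, Metric.mem_closedBall.mpr (le_of_lt (lt_of_lt_of_le (hxsd n) (min_le_right _ _)))⟩
  have hCmem : ∀ n, xs n ∈ C n := fun n => mem_connectedComponentIn (hxsmem n)
  have hCsub : ∀ n, C n ⊆ X ∩ Metric.closedBall x R2 := fun n => connectedComponentIn_subset _ _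
  have hCsphere : ∀ n, (C n ∩ Metric.sphere x R2).Nonempty := fun n =>
    bump hcomp hconn.isPreconnected (hnotball R2 hR20 (by rw [hR2]; linarith)) (hxsmem n)
  -- nested limit continua
  set K : ℕ → Set ℂ := fun N => closure (⋃ n, ⋃ (_ : N ≤ n), C n) with hK
  have hKsub : ∀ N, K N ⊆ X ∩ Metric.closedBall x R2 := by
    intro N
    apply closure_minimal _ ((hcomp.inter_right Metric.isClosed_closedBall).isClosed)
    exact Set.iUnion₂_subset (fun n _ => hCsub n)
  have hKcpt : ∀ N, IsCompact (K N) := fun N =>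
    (hcomp.inter_right Metric.isClosed_closedBall).of_isClosed_subset isClosed_closure (hKsub N)
  have hxK : ∀ N, x ∈ K N := by
    intro N
    apply mem_closure_of_tendsto (hxstend.comp (tendsto_add_atTop_nat N))
    apply Filter.Eventually.of_forall
    intro n
    exact Set.mem_iUnion₂.mpr ⟨n + N, Nat.le_add_left _ _, hCmem (n + N)⟩
  have hKmono : ∀ N, K (N + 1) ⊆ K N := by
    intro N
    apply closure_mono
    apply Set.iUnion₂_subset
    intro n hn
    exact Set.subset_iUnion₂_of_subset n (by omega) (le_refl _)
  set K' : ℕ → Set ℂ := fun N => connectedComponentIn (K N) x with hK'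
  have hK'pre : ∀ N, IsPreconnected (K' N) := fun N => isPreconnected_connectedComponentIn
  have hK'cpt : ∀ N, IsCompact (K' N) := fun N => componentIn_compact (hKcpt N) x
  have hK'mono : ∀ N, K' (N + 1) ⊆ K' N := fun N => connectedComponentIn_mono x (hKmono N)
  -- each K' N meets the sphere of radius R2
  have hK'sphere : ∀ N, (K' N ∩ Metric.sphere x R2).Nonempty := by
    intro N
    by_contra hemp
    rw [Set.not_nonempty_iff_eq_empty] at hemp
    haveI : CompactSpace ↥(K N) := isCompact_iff_compactSpace.mp (hKcpt N)
    set xh : ↥(K N) := ⟨x, hxK N⟩ with hxh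
    have him : K' N = Subtype.val '' connectedComponent xh := connectedComponentIn_eq_image (hxK N)
    have hdisj : Disjoint (connectedComponent xh) (Subtype.val ⁻¹' Metric.sphere x R2) := by
      rw [Set.disjoint_left]
      intro w hw hws
      have : (w : ℂ) ∈ K' N ∩ Metric.sphere x R2 := ⟨him ▸ Set.mem_image_of_mem _ hw, hws⟩
      rw [hemp] at this
      exact this
    obtain ⟨Dh, hDclopen, hDsub, hDdisj⟩ :=
      clopen_sep xh (Metric.isClosed_sphere.preimage continuous_subtype_val) hdisj
    obtain ⟨O, hOopen, hOD⟩ := isOpen_induced_iff.mp hDclopen.isOpen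
    have hxO : x ∈ O := by
      have : xh ∈ Dh := hDsub mem_connectedComponent
      rw [← hOD] at this
      exact this
    obtain ⟨n, hnN, hnO⟩ : ∃ n, N ≤ n ∧ xs n ∈ O := by
      obtain ⟨M, hM⟩ := Filter.eventually_atTop.mp (hxstend.eventually_mem (hOopen.mem_nhds hxO))
      exact ⟨max N M, le_max_left _ _, hM _ (le_max_right _ _)⟩
    have hCK : C n ⊆ K N := by
      intro c hc
      exact subset_closure (Set.mem_iUnion₂.mpr ⟨n, hnN, hc⟩)
    set Ch : Set ↥(K N) := Subtype.val ⁻¹' C n with hCh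
    have hChpre : IsPreconnected Ch := by
      rw [← Topology.IsInducing.subtypeVal.isPreconnected_image]
      have himg : (Subtype.val : ↥(K N) → ℂ) '' Ch = C n :=
        Set.image_preimage_eq_of_subset (fun c hc => ⟨⟨c, hCK hc⟩, rfl⟩)
      rw [himg]
      exact isPreconnected_connectedComponentIn
    have hne : (Ch ∩ Dh).Nonempty := by
      refine ⟨⟨xs n, hCK (hCmem n)⟩, hCmem n, ?_⟩
      rw [← hOD]
      exact hnO
    have hChD : Ch ⊆ Dh := hChpre.subset_isClopen hDclopen hne
    obtain ⟨c, hcC, hcS⟩ := hCsphere n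
    have hcD : (⟨c, hCK hcC⟩ : ↥(K N)) ∈ Dh := hChD hcC
    exact Set.disjoint_left.mp hDdisj hcD hcS
  -- the limit continuum
  set Kinf : Set ℂ := ⋂ N, K' N with hKinf
  have hKinfpre : IsPreconnected Kinf :=
    nested_preconnected K' hK'cpt hK'pre hK'mono
  obtain ⟨y, hy⟩ : (⋂ N, (K' N ∩ Metric.sphere x R2)).Nonempty := by
    apply IsCompact.nonempty_iInter_of_sequence_nonempty_isCompact_isClosed
    · exact fun N => Set.inter_subset_inter (hK'mono N) (le_refl _)
    · exact hK'sphere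
    · exact (hK'cpt 0).inter_right Metric.isClosed_sphere
    · exact fun N => ((hK'cpt N).isClosed).inter Metric.isClosed_sphere
  have hyK : y ∈ Kinf := Set.mem_iInter.mpr (fun N => (Set.mem_iInter.mp hy N).1)
  have hysph : dist y x = R2 := (Set.mem_iInter.mp hy 0).2
  have hxKinf : x ∈ Kinf := Set.mem_iInter.mpr (fun N => mem_connectedComponentIn (hxK N))
  -- Kinf is contained in the pseudo-fiber
  have hKpf : Kinf ⊆ pseudoFiber X x := by
    intro z hz
    have hzK : ∀ N, z ∈ K N := fun N =>
      connectedComponentIn_subset _ _ (Set.mem_iInter.mp hz N)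
    refine ⟨(hKsub 0 (hzK 0)).1, ?_⟩
    rintro ⟨γ, hγ, hsep⟩
    -- approximating points in the tails
    have happrox : ∀ N : ℕ, ∃ n : ℕ, ∃ c : ℂ, N ≤ n ∧ c ∈ C n ∧ dist c z < 1 / ((N:ℝ) + 1) := by
      intro N
      have hcl := hzK N
      rw [hK, Metric.mem_closure_iff] at hcl
      obtain ⟨b, hb, hbd⟩ := hcl (1 / ((N:ℝ) + 1)) (by positivity)
      obtain ⟨n, hn, hbC⟩ := Set.mem_iUnion₂.mp hb
      exact ⟨n, b, hn, hbC, by rwa [dist_comm]⟩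
    choose ν qs hν1 hν2 hν3 using happrox
    -- the finite set of frontier points on the cut
    have hfinF : {c : ℂ | (c : OnePoint ℂ) ∈ γ ∧ c ∈ frontier X}.Finite := by
      have heq : {c : ℂ | (c : OnePoint ℂ) ∈ γ ∧ c ∈ frontier X}
          = (fun c : ℂ => (c : OnePoint ℂ)) ⁻¹' (γ ∩ emb (frontier X)) := by
        ext c
        simp only [Set.mem_setOf_eq, Set.mem_preimage, Set.mem_inter_iff]
        constructor
        · rintro ⟨h1, h2⟩
          exact ⟨h1, Set.mem_image_of_mem _ h2⟩
        · rintro ⟨h1, d, hd, hdc⟩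
          exact ⟨h1, OnePoint.coe_injective hdc ▸ hd⟩
      rw [heq]
      exact Set.Finite.preimage (OnePoint.coe_injective.injOn) hγ.2.2.1
    -- for every radius in [R2, R] the cut has a frontier point at that exact distance
    have hmain : ∀ r : ℝ, r ∈ Set.Icc R2 R →
        ∃ v : ℂ, (v : OnePoint ℂ) ∈ γ ∧ v ∈ frontier X ∧ dist v x = r := by
      intro r hr
      have hxsmem'' : ∀ j, xs (ν j) ∈ X ∩ Metric.closedBall x r := fun j =>
        ⟨hxsX _, Metric.mem_closedBall.mpr (le_trans
          (le_of_lt (lt_of_lt_of_le (hxsd _) (min_le_right _ _))) hr.1)⟩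
      set D0 : ℕ → Set ℂ := fun j => connectedComponentIn (X ∩ Metric.closedBall x r) (xs (ν j)) with hD0
      have hD0eq : ∀ j, D0 j = connectedComponentIn (X ∩ Metric.closedBall x r) (xs (ν j)) :=
        fun j => by rw [hD0]
      have hD0rec : ∀ S : Set ℂ, {j | D0 j = S}.Finite := by
        intro S
        by_contra hinf
        have hinf' : {j | D0 j = S}.Infinite := hinf
        have hxS : x ∈ S := by
          have hScl : IsClosed S := by
            obtain ⟨j0, hj0⟩ := hinf'.nonempty
            rw [← hj0, hD0eq j0]
            exact componentIn_closed (hcomp.inter_right Metric.isClosed_closedBall) _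
          rw [← hScl.closure_eq, Metric.mem_closure_iff]
          intro δ hδ
          obtain ⟨M, hM⟩ : ∃ M : ℕ, 1 / ((M : ℝ) + 1) < δ := exists_nat_one_div_lt hδ
          obtain ⟨j, hjmem, hjM⟩ := hinf'.exists_gt M
          refine ⟨xs (ν j), ?_, ?_⟩
          · have : xs (ν j) ∈ D0 j := by
              rw [hD0eq j]
              exact mem_connectedComponentIn (hxsmem'' j)
            rwa [hjmem] at this
          · rw [dist_comm]
            calc dist (xs (ν j)) x < min (1 / ((ν j : ℝ) + 1)) R2 := hxsd _
              _ ≤ 1 / ((ν j : ℝ) + 1) := min_le_left _ _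
              _ ≤ 1 / ((j:ℝ) + 1) := one_div_nat_le (hν1 j)
              _ ≤ 1 / ((M:ℝ) + 1) := one_div_nat_le (le_of_lt hjM)
              _ < δ := hM
        obtain ⟨j, hjmem⟩ := hinf'.nonempty
        apply hxsC2 (ν j) r hr.2
        have hxD : x ∈ connectedComponentIn (X ∩ Metric.closedBall x r) (xs (ν j)) := by
          rw [← hD0eq j]
          rw [(hjmem : D0 j = S)]
          exact hxS
        rw [← connectedComponentIn_eq hxD]
        exact mem_connectedComponentIn (hxsmem'' j)
      obtain ⟨φ, hφmono, hφinj⟩ := exists_inj_subseq D0 hD0rec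
      have hxsmem' : ∀ j, xs (ν j) ∈ X ∩ Metric.closedBall x r := hxsmem''
      have hres := crossing hcomp hγ hsep
        (D := fun j => D0 (φ j)) (a := fun j => xs (ν (φ j)))
        (p := fun j => xs (ν (φ j))) (q := fun j => qs (φ j))
        (fun j => hD0eq (φ j))
        (fun i j hij => componentIn_disj (hφinj.ne hij))
        (fun j => mem_connectedComponentIn (hxsmem' (φ j)))
        (fun j => by
          have h1 : qs (φ j) ∈ C (ν (φ j)) := hν2 _
          have h2 : C (ν (φ j)) ⊆ D0 (φ j) := by
            rw [hC, hD0]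
            exact connectedComponentIn_mono _ (Set.inter_subset_inter (le_refl _)
              (Metric.closedBall_subset_closedBall hr.1))
          exact h2 h1)
        (by
          rw [tendsto_iff_dist_tendsto_zero]
          apply squeeze_zero (fun j => dist_nonneg) (fun j => ?_)
            tendsto_one_div_add_atTop_nhds_zero_nat
          calc dist (xs (ν (φ j))) x ≤ min (1 / ((ν (φ j) : ℝ) + 1)) R2 := le_of_lt (hxsd _)
            _ ≤ 1 / ((ν (φ j) : ℝ) + 1) := min_le_left _ _
            _ ≤ 1 / ((j:ℝ) + 1) := one_div_nat_le (le_trans hφmono.le_apply (hν1 _)))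
        (by
          rw [tendsto_iff_dist_tendsto_zero]
          apply squeeze_zero (fun j => dist_nonneg) (fun j => ?_)
            tendsto_one_div_add_atTop_nhds_zero_nat
          calc dist (qs (φ j)) z ≤ 1 / ((φ j : ℝ) + 1) := le_of_lt (hν3 _)
            _ ≤ 1 / ((j:ℝ) + 1) := one_div_nat_le hφmono.le_apply)
      obtain ⟨v, hv1, hv2, hv3⟩ := hres
      exact ⟨v, hv2, hv1, hv3⟩
    -- injectivity into the finite frontier set
    set G : ↥(Set.Icc R2 R) → ℂ := fun r => (hmain r r.2).choose with hG
    have hGmem : ∀ r : ↥(Set.Icc R2 R),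
        G r ∈ {c : ℂ | (c : OnePoint ℂ) ∈ γ ∧ c ∈ frontier X} := by
      intro r
      obtain ⟨h1, h2, _⟩ := (hmain r r.2).choose_spec
      exact ⟨h1, h2⟩
    have hGdist : ∀ r : ↥(Set.Icc R2 R), dist (G r) x = r := fun r =>
      (hmain r r.2).choose_spec.2.2
    have hGinj : Function.Injective G := by
      intro r1 r2 h
      apply Subtype.ext
      rw [← hGdist r1, ← hGdist r2, h]
    haveI : Infinite ↥(Set.Icc R2 R) :=
      (Set.Icc_infinite (by rw [hR2]; linarith)).to_subtype
    exact (Set.infinite_of_injective_forall_mem hGinj hGmem) hfinF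
  -- conclusion
  intro hfib
  have hyfib : y ∈ fiber X x :=
    (hKinfpre.subset_connectedComponentIn hxKinf hKpf) hyK
  rw [hfib, Set.mem_singleton_iff] at hyfib
  rw [hyfib] at hysph
  rw [dist_self] at hysph
  exact absurd hysph.symm (ne_of_gt hR20)

end Main
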